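/- arXiv:2103.14987 — 7 statements merged into one kernel-verified Lean document; each statement's English description precedes it below -/
import Mathlib

section
/- For a scalar z and α > 0, the set of minimizers of y ↦ (1/2)(y - z)² + α·ℓ(y), where ℓ(y) = 1 if y > 0 and 0 if y ≤ 0, equals {0} if |z - √(α/2)| < √(α/2), equals {0, z} if |z - √(α/2)| = √(α/2), and equals {z} if |z - √(α/2)| > √(α/2). -/
/-- Heaviside / 0-1 loss: 1 for positive arguments, 0 otherwise. -/
noncomputable def heaviside (t : ℝ) : ℝ := if 0 < t then 1 else 0

/-- The set of minimizers of `y ↦ (1/2)(y-z)² + α·ℓ(y)`. -/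
noncomputable def proxSet (α z : ℝ) : Set ℝ :=
  {y | ∀ t : ℝ, (1/2) * (y - z)^2 + α * heaviside y ≤ (1/2) * (t - z)^2 + α * heaviside t}

lemma hv_pos {t : ℝ} (h : 0 < t) : heaviside t = 1 := if_pos h
lemma hv_nonpos {t : ℝ} (h : t ≤ 0) : heaviside t = 0 := if_neg (not_lt.mpr h)

lemma sq_eq_zero_of_le {x : ℝ} (h : x^2 ≤ 0) : x = 0 :=
  pow_eq_zero_iff two_ne_zero |>.mp (le_antisymm h (sq_nonneg x))

lemma mem_prox_iff (α z y : ℝ) (hα : 0 < α) :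
    y ∈ proxSet α z ↔
      (1/2)*(y-z)^2 + α*heaviside y ≤ (1/2)*(0-z)^2 + α*heaviside 0 ∧
      (1/2)*(y-z)^2 + α*heaviside y ≤ (1/2)*(z-z)^2 + α*heaviside z := by
  constructor
  · intro h; exact ⟨h 0, h z⟩
  · rintro ⟨h0, hz⟩ t
    rcases le_or_gt t 0 with ht | ht
    · rcases le_or_gt z 0 with hzle | hzpos
      · refine hz.trans ?_
        rw [hv_nonpos hzle, hv_nonpos ht]
        nlinarith [sq_nonneg (t - z)]
      · refine h0.trans ?_
        rw [hv_nonpos (le_refl (0:ℝ)), hv_nonpos ht]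
        nlinarith
    · rw [hv_pos ht]
      rcases le_or_gt z 0 with hzle | hzpos
      · refine hz.trans ?_
        rw [hv_nonpos hzle]
        nlinarith [sq_nonneg (t - z)]
      · refine hz.trans ?_
        rw [hv_pos hzpos]
        nlinarith [sq_nonneg (t - z)]

set_option maxHeartbeats 1600000 in
theorem stmt_0 (α z : ℝ) (hα : 0 < α) :
    (|z - Real.sqrt (α/2)| < Real.sqrt (α/2) → proxSet α z = {0}) ∧
    (|z - Real.sqrt (α/2)| = Real.sqrt (α/2) → proxSet α z = {0, z}) ∧
    (|z - Real.sqrt (α/2)| > Real.sqrt (α/2) → proxSet α z = {z}) := by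
  set s := Real.sqrt (α/2) with hs_def
  have hs : 0 < s := Real.sqrt_pos.mpr (by linarith)
  have hs2 : s^2 = α/2 := Real.sq_sqrt (by linarith)
  refine ⟨?_, ?_, ?_⟩
  · -- strict interior: 0 < z < 2s, minimizer {0}
    intro h
    rw [abs_lt] at h
    have hz0 : 0 < z := by linarith [h.1]
    have hz2 : z < 2*s := by linarith [h.2]
    ext y
    rw [mem_prox_iff α z y hα, hv_pos hz0, hv_nonpos (le_refl (0:ℝ))]
    simp only [Set.mem_singleton_iff]
    constructor
    · rintro ⟨h0, -⟩
      rcases le_or_gt y 0 with hy | hy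
      · rw [hv_nonpos hy] at h0
        have hy0 : 0 ≤ y := by nlinarith
        linarith
      · rw [hv_pos hy] at h0
        exfalso; nlinarith
    · rintro rfl
      rw [hv_nonpos (le_refl (0:ℝ))]
      constructor
      · nlinarith
      · nlinarith
  · -- boundary: z = 0 or z = 2s, minimizers {0, z}
    intro h
    rw [abs_eq hs.le] at h
    rcases h with h | h
    · -- z = 2s
      have hz : z = 2*s := by linarith
      have hz0 : 0 < z := by rw [hz]; linarith
      have hza : z^2 = 2*α := by rw [hz]; ring_nf; nlinarith
      ext y
      rw [mem_prox_iff α z y hα, hv_pos hz0, hv_nonpos (le_refl (0:ℝ))]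
      simp only [Set.mem_insert_iff, Set.mem_singleton_iff]
      constructor
      · rintro ⟨h0, hz1⟩
        rcases le_or_gt y 0 with hy | hy
        · rw [hv_nonpos hy] at h0
          left
          have hy0 : 0 ≤ y := by nlinarith
          linarith
        · rw [hv_pos hy] at hz1
          right
          have h2 : (y - z)^2 ≤ 0 := by nlinarith
          have := sq_eq_zero_of_le h2
          linarith
      · rintro (rfl | rfl)
        · rw [hv_nonpos (le_refl (0:ℝ))]
          exact ⟨by nlinarith, by nlinarith⟩
        · rw [hv_pos hz0]
          exact ⟨by nlinarith, by nlinarith⟩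
    · -- z = 0
      have hz : z = 0 := by linarith
      subst hz
      ext y
      rw [mem_prox_iff α 0 y hα, hv_nonpos (le_refl (0:ℝ))]
      simp only [Set.mem_insert_iff, Set.mem_singleton_iff, or_self]
      constructor
      · rintro ⟨h0, -⟩
        rcases le_or_gt y 0 with hy | hy
        · rw [hv_nonpos hy] at h0
          have h2 : y^2 ≤ 0 := by nlinarith
          simpa using sq_eq_zero_of_le h2
        · rw [hv_pos hy] at h0
          exfalso; nlinarith [sq_nonneg y]
      · rintro rfl
        rw [hv_nonpos (le_refl (0:ℝ))]
        norm_num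
  · -- exterior: z < 0 or z > 2s, minimizer {z}
    intro h
    rw [gt_iff_lt, lt_abs] at h
    rcases h with h | h
    · -- z > 2s
      have hz2 : 2*s < z := by linarith
      have hz0 : 0 < z := by linarith
      have hza : 2*α < z^2 := by nlinarith
      ext y
      rw [mem_prox_iff α z y hα, hv_pos hz0, hv_nonpos (le_refl (0:ℝ))]
      simp only [Set.mem_singleton_iff]
      constructor
      · rintro ⟨h0, hz1⟩
        rcases le_or_gt y 0 with hy | hy
        · rw [hv_nonpos hy] at hz1
          exfalso; nlinarith
        · rw [hv_pos hy] at hz1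
          have h2 : (y - z)^2 ≤ 0 := by nlinarith
          have := sq_eq_zero_of_le h2
          linarith
      · rintro rfl
        rw [hv_pos hz0]
        exact ⟨by nlinarith, by nlinarith⟩
    · -- z < 0
      have hz0 : z < 0 := by linarith
      ext y
      rw [mem_prox_iff α z y hα, hv_nonpos hz0.le, hv_nonpos (le_refl (0:ℝ))]
      simp only [Set.mem_singleton_iff]
      constructor
      · rintro ⟨-, hz1⟩
        have hnn : 0 ≤ α * heaviside y := by
          unfold heaviside; split_ifs <;> nlinarith
        have hzz : ((z:ℝ) - z)^2 = 0 := by ring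
        have h2 : (y - z)^2 ≤ 0 := by linarith
        have := sq_eq_zero_of_le h2
        linarith
      · rintro rfl
        rw [hv_nonpos hz0.le]
        exact ⟨by nlinarith, by nlinarith⟩
end

section
/- Let v ∈ ℝ^m satisfy v_i = 0 whenever y_i ≠ 0 and v_i ≥ 0 whenever y_i = 0. Then v belongs to the regular (Fréchet) subdifferential of g(z) = ‖z₊‖₀ at y, i.e., liminf over z → y, z ≠ y, of (g(z) − g(y) − ⟨v, z − y⟩)/‖z − y‖ is ≥ 0. -/
open Filter

lemma coord_abs_le_norm {m : ℕ} (w : EuclideanSpace ℝ (Fin m)) (i : Fin m) :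
    |w i| ≤ ‖w‖ := by
  have h : ‖w i‖ ^ 2 ≤ ∑ j, ‖w j‖ ^ 2 :=
    Finset.single_le_sum (f := fun j => ‖w j‖ ^ 2) (fun _ _ => sq_nonneg _) (Finset.mem_univ i)
  calc |w i| = Real.sqrt (‖w i‖ ^ 2) := by
        rw [Real.sqrt_sq (norm_nonneg _), Real.norm_eq_abs]
    _ ≤ Real.sqrt (∑ j, ‖w j‖ ^ 2) := Real.sqrt_le_sqrt h
    _ = ‖w‖ := (EuclideanSpace.norm_eq w).symm

theorem stmt_3 (m : ℕ) (y v : EuclideanSpace ℝ (Fin m))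
    (h1 : ∀ i, y i ≠ 0 → v i = 0) (h2 : ∀ i, y i = 0 → 0 ≤ v i) :
    0 ≤ Filter.liminf
      (fun z : EuclideanSpace ℝ (Fin m) =>
        ((Nat.card {i : Fin m | 0 < z i} : ℝ) - (Nat.card {i : Fin m | 0 < y i} : ℝ)
          - (inner ℝ v (z - y) : ℝ)) / ‖z - y‖)
      (nhdsWithin y {z | z ≠ y}) := by
  classical
  set F := nhdsWithin y {z | z ≠ y} with hF
  set u : EuclideanSpace ℝ (Fin m) → ℝ := fun z =>
    ((Nat.card {i : Fin m | 0 < z i} : ℝ) - (Nat.card {i : Fin m | 0 < y i} : ℝ)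
      - (inner ℝ v (z - y) : ℝ)) / ‖z - y‖ with hu
  have hcoord : ∀ᶠ z in nhds y, ∀ i : Fin m, (0 < y i → 0 < z i) ∧ (y i < 0 → z i < 0) := by
    rw [eventually_all]
    intro i
    have hc : Continuous fun z : EuclideanSpace ℝ (Fin m) => z i :=
      (EuclideanSpace.proj (𝕜 := ℝ) i).continuous
    have ht : Tendsto (fun z : EuclideanSpace ℝ (Fin m) => z i) (nhds y) (nhds (y i)) :=
      hc.tendsto y
    rcases lt_trichotomy (y i) 0 with h | h | h
    · filter_upwards [ht.eventually_lt_const h] with z hz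
      exact ⟨fun h' => absurd h' (not_lt.mpr h.le), fun _ => hz⟩
    · filter_upwards with z
      exact ⟨fun h' => absurd h (by simp [h'.ne']), fun h' => absurd h (by simp [h'.ne])⟩
    · filter_upwards [ht.eventually_const_lt h] with z hz
      exact ⟨fun _ => hz, fun h' => absurd h' (not_lt.mpr h.le)⟩
  have hball : ∀ᶠ z in nhds y, ‖z - y‖ < (‖v‖ + 1)⁻¹ := by
    have hr : (0:ℝ) < (‖v‖ + 1)⁻¹ := by positivity
    filter_upwards [Metric.ball_mem_nhds y hr] with z hz
    rwa [Metric.mem_ball, dist_eq_norm] at hz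
  have hev : ∀ᶠ z in F, 0 ≤ u z := by
    filter_upwards [hcoord.filter_mono nhdsWithin_le_nhds,
      hball.filter_mono nhdsWithin_le_nhds, self_mem_nhdsWithin] with z hz1 hz2 hzne
    have hzne' : z ≠ y := hzne
    have hnorm_pos : (0:ℝ) < ‖z - y‖ := by
      rw [norm_pos_iff]; exact sub_ne_zero.mpr hzne'
    apply div_nonneg _ (norm_nonneg _)
    -- Finset notation
    set Az : Finset (Fin m) := Finset.univ.filter (fun i => 0 < z i) with hAz
    set Ay : Finset (Fin m) := Finset.univ.filter (fun i => 0 < y i) with hAy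
    set Zf : Finset (Fin m) := Finset.univ.filter (fun i => y i = 0) with hZf
    set S : Finset (Fin m) := Finset.univ.filter (fun i => y i = 0 ∧ 0 < z i) with hS
    have hcardz : (Nat.card {i : Fin m | 0 < z i} : ℝ) = Az.card := by
      simp [Nat.card_coe_set_eq, Set.ncard_eq_toFinset_card', Set.toFinset_setOf, Fintype.card_subtype, hAz]
    have hcardy : (Nat.card {i : Fin m | 0 < y i} : ℝ) = Ay.card := by
      simp [Nat.card_coe_set_eq, Set.ncard_eq_toFinset_card', Set.toFinset_setOf, Fintype.card_subtype, hAy]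
    have hsub : Ay ⊆ Az := by
      intro i hi
      simp only [hAy, hAz, Finset.mem_filter, Finset.mem_univ, true_and] at *
      exact (hz1 i).1 hi
    have hdiff : Az \ Ay = S := by
      ext i
      simp only [hAz, hAy, hS, Finset.mem_sdiff, Finset.mem_filter, Finset.mem_univ, true_and,
        not_lt]
      constructor
      · rintro ⟨hzi, hyi⟩
        refine ⟨le_antisymm hyi ?_, hzi⟩
        by_contra hlt
        exact absurd hzi (not_lt.mpr ((hz1 i).2 (lt_of_not_ge hlt)).le)
      · rintro ⟨hyi, hzi⟩
        exact ⟨hzi, hyi.le⟩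
    have hScard : (Az.card : ℝ) - Ay.card = S.card := by
      rw [← hdiff, Finset.card_sdiff_of_subset hsub]
      have := Finset.card_le_card hsub
      push_cast [Nat.cast_sub this]
      ring
    have hSZ : S ⊆ Zf := fun i hi => by
      simp only [hS, hZf, Finset.mem_filter, Finset.mem_univ, true_and] at *
      exact hi.1
    have hinner : (inner ℝ v (z - y) : ℝ) = ∑ i ∈ Zf, v i * z i := by
      rw [PiLp.inner_apply]
      simp only [RCLike.inner_apply, starRingEnd_apply, star_trivial]
      rw [← Finset.sum_subset (Finset.subset_univ Zf) (fun i _ hi => by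
        have hyi : y i ≠ 0 := by simpa [hZf] using hi
        simp [h1 i hyi])]
      refine Finset.sum_congr rfl fun i hi => ?_
      have hyi : y i = 0 := by simpa [hZf] using hi
      simp [PiLp.sub_apply, hyi]
      ring
    have hsplit : ∑ i ∈ Zf, v i * z i = ∑ i ∈ Zf \ S, v i * z i + ∑ i ∈ S, v i * z i :=
      (Finset.sum_sdiff hSZ).symm
    have hneg : ∑ i ∈ Zf \ S, v i * z i ≤ 0 := by
      apply Finset.sum_nonpos
      intro i hi
      simp only [hZf, hS, Finset.mem_sdiff, Finset.mem_filter, Finset.mem_univ, true_and] at hi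
      have hyi : y i = 0 := hi.1
      have hzi : z i ≤ 0 := by
        by_contra h
        exact hi.2 ⟨hyi, lt_of_not_ge h⟩
      exact mul_nonpos_of_nonneg_of_nonpos (h2 i hyi) hzi
    have hpos : ∑ i ∈ S, v i * z i ≤ (S.card : ℝ) := by
      calc ∑ i ∈ S, v i * z i ≤ ∑ i ∈ S, 1 := by
              apply Finset.sum_le_sum
              intro i hi
              simp only [hS, Finset.mem_filter, Finset.mem_univ, true_and] at hi
              have hvi : 0 ≤ v i := h2 i hi.1
              have hvle : v i ≤ ‖v‖ := (le_abs_self _).trans (coord_abs_le_norm v i)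
              have hzle : z i ≤ ‖z - y‖ := by
                calc z i = (z - y) i + y i := by simp [PiLp.sub_apply]
                  _ = (z - y) i := by rw [hi.1, add_zero]
                  _ ≤ |(z - y) i| := le_abs_self _
                  _ ≤ ‖z - y‖ := coord_abs_le_norm _ i
              calc v i * z i ≤ ‖v‖ * ‖z - y‖ :=
                    mul_le_mul hvle hzle hi.2.le (norm_nonneg _)
                _ ≤ ‖v‖ * (‖v‖ + 1)⁻¹ :=
                    mul_le_mul_of_nonneg_left hz2.le (norm_nonneg _)
                _ ≤ 1 := by
                    rw [mul_inv_le_iff₀ (by positivity), one_mul]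
                    linarith
        _ = (S.card : ℝ) := by simp
    rw [hcardz, hcardy, hinner, hScard, hsplit]
    linarith
  rw [Filter.liminf_eq]
  by_cases hb : BddAbove {a : ℝ | ∀ᶠ z in F, a ≤ u z}
  · exact le_csSup hb hev
  · rw [Real.sSup_of_not_bddAbove hb]
end

section
/- Let f : ℝⁿ → ℝ be convex and differentiable, A ∈ ℝ^{m×n}, b ∈ ℝ^m, λ > 0, and suppose x* satisfies: there exists z* ∈ ℝ^m with ∇f(x*) + Aᵀz* = 0, z*_i ≥ 0 whenever (Ax* + b)_i = 0, and z*_i = 0 whenever (Ax* + b)_i ≠ 0. Then x* is a local minimizer of x ↦ f(x) + λ‖(Ax + b)₊‖₀. -/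
open AffineMap RealInnerProductSpace

lemma convex_first_order {E : Type*} [NormedAddCommGroup E] [InnerProductSpace ℝ E]
    [CompleteSpace E]
    {f : E → ℝ} (hconv : ConvexOn ℝ Set.univ f) (hdiff : Differentiable ℝ f) (x y : E) :
    f x + ⟪gradient f x, y - x⟫ ≤ f y := by
  have hφconv : ConvexOn ℝ Set.univ (f ∘ (lineMap x y : ℝ →ᵃ[ℝ] E)) := by
    have := hconv.comp_affineMap (lineMap x y : ℝ →ᵃ[ℝ] E)
    simpa using this
  have hline : HasDerivAt (fun t : ℝ => lineMap x y t) (y - x) 0 := by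
    have heq : (fun t : ℝ => lineMap x y t) = fun t : ℝ => t • (y - x) + x := by
      funext t; simp only [lineMap_apply_module]; module
    rw [heq]
    simpa using ((hasDerivAt_id (0:ℝ)).smul_const (y - x)).add_const x
  have hF : HasFDerivAt f (InnerProductSpace.toDual ℝ E (gradient f x)) x := by
    have := (hdiff x).hasGradientAt
    rwa [hasGradientAt_iff_hasFDerivAt] at this
  have hφ : HasDerivAt (f ∘ (lineMap x y : ℝ →ᵃ[ℝ] E)) ⟪gradient f x, y - x⟫ 0 := by
    have h0 : lineMap x y (0:ℝ) = x := lineMap_apply_zero x y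
    have h1 : HasFDerivAt f (InnerProductSpace.toDual ℝ E (gradient f x))
        ((fun t : ℝ => lineMap x y t) 0) := by simpa [h0] using hF
    have := h1.comp_hasDerivAt (0:ℝ) hline
    simpa using this
  have := hφconv.le_slope_of_hasDerivAt (Set.mem_univ (0:ℝ)) (Set.mem_univ (1:ℝ)) one_pos hφ
  simp [slope_def_field, Function.comp] at this
  have hg : ⟪gradient f x, y - x⟫ = (fderiv ℝ f x) y - (fderiv ℝ f x) x := by
    rw [gradient, InnerProductSpace.toDual_symm_apply, map_sub]
  linarith

theorem stmt_6 (n m : ℕ) (f : EuclideanSpace ℝ (Fin n) → ℝ)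
    (hconv : ConvexOn ℝ Set.univ f) (hdiff : Differentiable ℝ f)
    (A : Matrix (Fin m) (Fin n) ℝ) (b : Fin m → ℝ) (lam : ℝ) (hlam : 0 < lam)
    (xstar : EuclideanSpace ℝ (Fin n)) (zstar : Fin m → ℝ)
    (hgrad : ∀ j, gradient f xstar j + ∑ i, zstar i * A i j = 0)
    (hz1 : ∀ i, (∑ j, A i j * xstar j) + b i = 0 → 0 ≤ zstar i)
    (hz2 : ∀ i, (∑ j, A i j * xstar j) + b i ≠ 0 → zstar i = 0) :
    IsLocalMin
      (fun x : EuclideanSpace ℝ (Fin n) =>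
        f x + lam * (Nat.card {i : Fin m | 0 < (∑ j, A i j * x j) + b i} : ℝ)) xstar := by
  set g : Fin m → EuclideanSpace ℝ (Fin n) → ℝ :=
    fun i x => (∑ j, A i j * x j) + b i with hgdef
  have hgc : ∀ i, Continuous (g i) := by
    intro i
    apply Continuous.add _ continuous_const
    exact continuous_finset_sum _ fun j _ =>
      (continuous_const.mul ((continuous_apply j).comp (PiLp.continuous_ofLp 2 _)))
  have hU : ∀ᶠ x in nhds xstar, ∀ i,
      (0 < g i xstar → 0 < g i x) ∧ (g i xstar < 0 → g i x < 0) ∧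
      (g i xstar = 0 → zstar i * g i x < lam) := by
    rw [Filter.eventually_all]
    intro i
    rcases lt_trichotomy (g i xstar) 0 with h | h | h
    · have : ∀ᶠ x in nhds xstar, g i x < 0 :=
        (isOpen_lt (hgc i) continuous_const).eventually_mem (by simpa using h)
      filter_upwards [this] with x hx
      exact ⟨fun h' => absurd h' (not_lt.2 h.le), fun _ => hx, fun h' => absurd h' h.ne⟩
    · have : ∀ᶠ x in nhds xstar, zstar i * g i x < lam :=
        (isOpen_lt (continuous_const.mul (hgc i)) continuous_const).eventually_mem
          (by simp [h, hlam])
      filter_upwards [this] with x hx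
      exact ⟨fun h' => absurd h' (by simp [h]), fun h' => absurd h' (by simp [h]), fun _ => hx⟩
    · have : ∀ᶠ x in nhds xstar, 0 < g i x :=
        (isOpen_lt continuous_const (hgc i)).eventually_mem (by simpa using h)
      filter_upwards [this] with x hx
      exact ⟨fun _ => hx, fun h' => absurd h' (not_lt.2 h.le), fun h' => absurd h'.symm h.ne⟩
  filter_upwards [hU] with x hx
  -- Finset versions of the supports
  set S : Finset (Fin m) := Finset.univ.filter (fun i => 0 < g i xstar) with hS
  set T : Finset (Fin m) := Finset.univ.filter (fun i => 0 < g i x) with hT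
  have hNx : (Nat.card {i : Fin m | 0 < (∑ j, A i j * x j) + b i} : ℝ) = T.card := by
    have : {i : Fin m | 0 < (∑ j, A i j * x j) + b i} = (T : Set (Fin m)) := by
      ext i; simp [hT, hgdef]
    rw [this, Nat.card_coe_set_eq, Set.ncard_coe_finset]
  have hNxs : (Nat.card {i : Fin m | 0 < (∑ j, A i j * xstar j) + b i} : ℝ) = S.card := by
    have : {i : Fin m | 0 < (∑ j, A i j * xstar j) + b i} = (S : Set (Fin m)) := by
      ext i; simp [hS, hgdef]
    rw [this, Nat.card_coe_set_eq, Set.ncard_coe_finset]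
  rw [hNx, hNxs]
  have hST : S ⊆ T := by
    intro i hi
    rw [hS, Finset.mem_filter] at hi
    rw [hT, Finset.mem_filter]
    exact ⟨Finset.mem_univ i, (hx i).1 hi.2⟩
  -- elements of T \ S are active
  have hTS : ∀ i ∈ T \ S, g i xstar = 0 := by
    intro i hi
    rw [Finset.mem_sdiff, hT, hS, Finset.mem_filter, Finset.mem_filter] at hi
    rcases lt_trichotomy (g i xstar) 0 with h | h | h
    · exact absurd ((hx i).2.1 h) (not_lt.2 hi.1.2.le)
    · exact h
    · exact absurd (by exact ⟨Finset.mem_univ i, h⟩) hi.2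
  -- first-order convexity inequality
  have hfo := convex_first_order hconv hdiff xstar x
  have hinner : ⟪gradient f xstar, x - xstar⟫ = -∑ i, zstar i * g i x := by
    have h1 : ⟪gradient f xstar, x - xstar⟫
        = ∑ j, gradient f xstar j * (x j - xstar j) := by
      simp only [PiLp.inner_apply, RCLike.inner_apply, conj_trivial, PiLp.sub_apply]
      exact Finset.sum_congr rfl fun j _ => by ring
    rw [h1]
    have h2 : ∀ j, gradient f xstar j = -∑ i, zstar i * A i j := by
      intro j; linarith [hgrad j]
    have hgdiff : ∀ i, g i x - g i xstar = ∑ j, A i j * (x j - xstar j) := by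
      intro i
      simp only [hgdef, mul_sub]
      rw [Finset.sum_sub_distrib]
      ring
    have key : ∑ j, (∑ i, zstar i * A i j) * (x j - xstar j)
        = ∑ i, zstar i * ∑ j, A i j * (x j - xstar j) := by
      simp_rw [Finset.sum_mul]
      rw [Finset.sum_comm]
      simp_rw [Finset.mul_sum]
      exact Finset.sum_congr rfl fun i _ => Finset.sum_congr rfl fun j _ => by ring
    calc ∑ j, gradient f xstar j * (x j - xstar j)
        = -∑ j, (∑ i, zstar i * A i j) * (x j - xstar j) := by
          rw [← Finset.sum_neg_distrib]
          exact Finset.sum_congr rfl fun j _ => by rw [h2 j]; ring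
      _ = -∑ i, zstar i * (g i x - g i xstar) := by
          rw [key]
          congr 1
          exact Finset.sum_congr rfl fun i _ => by rw [hgdiff i]
      _ = -∑ i, zstar i * g i x := by
          congr 1
          refine Finset.sum_congr rfl fun i _ => ?_
          by_cases h : g i xstar = 0
          · rw [h]; ring
          · rw [hz2 i h]; ring
  -- bound the sum
  have hsum1 : ∑ i, zstar i * g i x ≤ ∑ i ∈ T \ S, zstar i * g i x := by
    have := Finset.sum_le_sum_of_subset_of_nonneg (s := T \ S) (t := Finset.univ)
      (f := fun i => -(zstar i * g i x)) (Finset.subset_univ _) ?_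
    · have h1 : ∑ i ∈ T \ S, -(zstar i * g i x) = -∑ i ∈ T \ S, zstar i * g i x :=
        Finset.sum_neg_distrib _
      have h2 : ∑ i, -(zstar i * g i x) = -∑ i, zstar i * g i x := Finset.sum_neg_distrib _
      rw [h1, h2] at this
      linarith
    · intro i _ hi
      show (0:ℝ) ≤ -(zstar i * g i x)
      rw [Finset.mem_sdiff, not_and_or, not_not] at hi
      by_cases hact : g i xstar = 0
      · rcases hi with hi | hi
        · rw [hT, Finset.mem_filter] at hi
          have hgx : g i x ≤ 0 := not_lt.1 fun h => hi ⟨Finset.mem_univ i, h⟩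
          have := hz1 i hact
          nlinarith
        · rw [hS, Finset.mem_filter] at hi
          exact absurd hact hi.2.ne'
      · rw [hz2 i hact]; simp
  have hsum2 : ∑ i ∈ T \ S, zstar i * g i x ≤ lam * (T \ S).card := by
    calc ∑ i ∈ T \ S, zstar i * g i x ≤ ∑ _i ∈ T \ S, lam :=
          Finset.sum_le_sum fun i hi => ((hx i).2.2 (hTS i hi)).le
      _ = lam * (T \ S).card := by rw [Finset.sum_const, nsmul_eq_mul]; ring
  have hcard : ((T \ S).card : ℝ) = (T.card : ℝ) - S.card := by
    rw [Finset.card_sdiff_of_subset hST]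
    rw [Nat.cast_sub (Finset.card_le_card hST)]
  rw [hcard] at hsum2
  linarith
end

section
/- Let f : ℝⁿ → ℝ be c_f-strongly convex and differentiable, λ > 0, and let (x*, z*) be a P-stationary point with parameter τ ≥ ‖A‖²/c_f, i.e., ∇f(x*) + Aᵀz* = 0 and Ax*+b belongs to the proximal set Prox_{τλ‖(·)₊‖₀}(Ax*+b+τz*). Then x* is a global minimizer of x ↦ f(x) + λ‖(Ax+b)₊‖₀. -/
/-- Spectral norm (l2 operator norm) of a real matrix. -/
noncomputable def matOpNorm {m n : ℕ} (A : Matrix (Fin m) (Fin n) ℝ) : ℝ :=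
  ‖LinearMap.toContinuousLinearMap (Matrix.toEuclideanLin A)‖

set_option maxHeartbeats 1000000 in
theorem stmt_7 (n m : ℕ) (f : EuclideanSpace ℝ (Fin n) → ℝ) (cf : ℝ) (hcf : 0 < cf)
    (hdiff : Differentiable ℝ f)
    (hsc : ∀ x x' : EuclideanSpace ℝ (Fin n),
      f x' + (inner ℝ (gradient f x') (x - x') : ℝ) + cf / 2 * ‖x - x'‖^2 ≤ f x)
    (A : Matrix (Fin m) (Fin n) ℝ) (b : Fin m → ℝ) (lam τ : ℝ)
    (hlam : 0 < lam) (hτ0 : 0 < τ) (hτ : matOpNorm A ^ 2 / cf ≤ τ)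
    (xstar : EuclideanSpace ℝ (Fin n)) (zstar ystar : EuclideanSpace ℝ (Fin m))
    (hy : ∀ i, ystar i = (∑ j, A i j * xstar j) + b i)
    (hgrad : ∀ j, gradient f xstar j + ∑ i, zstar i * A i j = 0)
    (hprox : ∀ y : EuclideanSpace ℝ (Fin m),
      (1/2) * ‖ystar - (ystar + τ • zstar)‖^2
        + τ * lam * (Nat.card {i : Fin m | 0 < ystar i} : ℝ)
      ≤ (1/2) * ‖y - (ystar + τ • zstar)‖^2
        + τ * lam * (Nat.card {i : Fin m | 0 < y i} : ℝ)) :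
    ∀ x : EuclideanSpace ℝ (Fin n),
      f xstar + lam * (Nat.card {i : Fin m | 0 < ystar i} : ℝ)
        ≤ f x + lam * (Nat.card {i : Fin m | 0 < (∑ j, A i j * x j) + b i} : ℝ) := by
  intro x
  set v : EuclideanSpace ℝ (Fin n) := x - xstar with hv
  set g : EuclideanSpace ℝ (Fin n) := gradient f xstar with hg
  set d : EuclideanSpace ℝ (Fin m) := Matrix.toEuclideanLin A v with hd
  -- the candidate y
  set y : EuclideanSpace ℝ (Fin m) := ystar + d with hyy
  have hyi : ∀ i, y i = (∑ j, A i j * x j) + b i := by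
    intro i
    have hdi : d i = ∑ j, A i j * v j := rfl
    have hvi : ∀ j, v j = x j - xstar j := fun j => rfl
    have hyi' : y i = ystar i + d i := rfl
    rw [hyi', hy i, hdi]
    simp only [hvi, mul_sub, Finset.sum_sub_distrib]
    ring
  -- inner ℝ d zstar = - inner ℝ g v
  have hinner : (inner ℝ d zstar : ℝ) = - (inner ℝ g v : ℝ) := by
    have h1 : (inner ℝ d zstar : ℝ) = ∑ i, d i * zstar i := by
      simp [PiLp.inner_apply, RCLike.inner_apply]
      exact Finset.sum_congr rfl fun _ _ => mul_comm _ _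
    have h2 : (inner ℝ g v : ℝ) = ∑ j, g j * v j := by
      simp [PiLp.inner_apply, RCLike.inner_apply]
      exact Finset.sum_congr rfl fun _ _ => mul_comm _ _
    rw [h1, h2]
    have e0 : ∑ i, d i * zstar i = ∑ i, (∑ j, A i j * v j) * zstar i := rfl
    rw [e0]
    calc ∑ i, (∑ j, A i j * v j) * zstar i
        = ∑ i, ∑ j, zstar i * A i j * v j := by
          refine Finset.sum_congr rfl fun i _ => ?_
          rw [Finset.sum_mul]
          exact Finset.sum_congr rfl fun j _ => by ring
      _ = ∑ j, ∑ i, zstar i * A i j * v j := Finset.sum_comm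
      _ = ∑ j, (∑ i, zstar i * A i j) * v j := by
          refine Finset.sum_congr rfl fun j _ => ?_
          rw [Finset.sum_mul]
      _ = - ∑ j, g j * v j := by
          rw [← Finset.sum_neg_distrib]
          refine Finset.sum_congr rfl fun j _ => ?_
          have hj := hgrad j
          have hzg : (∑ i, zstar i * A i j) = - g j := by linarith
          rw [hzg]; ring
  -- norm bound : ‖d‖ ≤ matOpNorm A * ‖v‖
  have hdle : ‖d‖ ≤ matOpNorm A * ‖v‖ := by
    have h := (LinearMap.toContinuousLinearMap (Matrix.toEuclideanLin A)).le_opNorm v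
    simpa [matOpNorm, hd] using h
  have hdsq : ‖d‖^2 ≤ τ * cf * ‖v‖^2 := by
    have h1 : ‖d‖^2 ≤ (matOpNorm A * ‖v‖)^2 := pow_le_pow_left₀ (norm_nonneg d) hdle 2
    have h2 : matOpNorm A ^ 2 ≤ τ * cf := by
      have := (div_le_iff₀ hcf).mp hτ
      linarith
    calc ‖d‖^2 ≤ (matOpNorm A)^2 * ‖v‖^2 := by rw [mul_pow] at h1; exact h1
      _ ≤ τ * cf * ‖v‖^2 := by nlinarith [sq_nonneg ‖v‖]
  -- use prox inequality
  have hp := hprox y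
  have hL : ystar - (ystar + τ • zstar) = -(τ • zstar) := by abel
  have hR : y - (ystar + τ • zstar) = d - τ • zstar := by rw [hyy]; abel
  rw [hL, hR] at hp
  have hnormL : ‖-(τ • zstar)‖^2 = τ^2 * ‖zstar‖^2 := by
    rw [norm_neg, norm_smul]
    simp [mul_pow, abs_of_pos hτ0]
  have hnormR : ‖d - τ • zstar‖^2
      = ‖d‖^2 - 2 * τ * (inner ℝ d zstar : ℝ) + τ^2 * ‖zstar‖^2 := by
    rw [norm_sub_sq_real, norm_smul, real_inner_smul_right]
    simp [mul_pow, abs_of_pos hτ0]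
    ring
  rw [hnormL, hnormR] at hp
  -- strong convexity
  have hscx : f xstar + (inner ℝ g v : ℝ) + cf / 2 * ‖v‖^2 ≤ f x := hsc x xstar
  -- set card expressions
  set S0 : ℝ := (Nat.card {i : Fin m | 0 < ystar i} : ℝ) with hS0
  have hsetseq : {i : Fin m | 0 < y i} = {i : Fin m | 0 < (∑ j, A i j * x j) + b i} := by
    ext i
    simp only [Set.mem_setOf_eq, hyi i]
  rw [hsetseq] at hp
  set S1 : ℝ := (Nat.card {i : Fin m | 0 < (∑ j, A i j * x j) + b i} : ℝ) with hS1
  -- from hp: τ*lam*S0 ≤ τ*lam*S1 + (1/2)*‖d‖² - τ * ⟨d,z⟩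
  have key : lam * S0 ≤ lam * S1 + ‖d‖^2 / (2*τ) - (inner ℝ d zstar : ℝ) := by
    rw [← mul_le_mul_iff_of_pos_left hτ0]
    have e : τ * (lam * S1 + ‖d‖^2 / (2*τ) - (inner ℝ d zstar : ℝ))
        = τ * lam * S1 + ‖d‖^2 / 2 - τ * (inner ℝ d zstar : ℝ) := by
      field_simp
    rw [e]
    nlinarith [hp]
  rw [hinner] at key
  have hbound : ‖d‖^2 / (2*τ) ≤ cf/2 * ‖v‖^2 := by
    rw [div_le_iff₀ (by positivity : (0:ℝ) < 2*τ)]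
    nlinarith
  linarith
end

section
/- Let y*, z* ∈ ℝ^m and τ, λ > 0 satisfy: y*_i = 0 whenever z*_i ≠ 0; z*_i ≥ 0 for all i; y*_i > √(2τλ) whenever y*_i > 0; and τz*_i < √(2τλ) whenever z*_i > 0. Then for each coordinate i, y*_i is a minimizer of t ↦ (1/(2τ))(t − (y*_i + τz*_i))² + λ·ℓ(t), where ℓ(t)=1 for t>0 and 0 otherwise, i.e., y* ∈ Prox_{τλ‖(·)₊‖₀}(y* + τz*). -/
theorem stmt_9 (m : ℕ) (τ lam : ℝ) (hτ : 0 < τ) (hlam : 0 < lam)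
    (ystar zstar : Fin m → ℝ)
    (h1 : ∀ i, zstar i ≠ 0 → ystar i = 0)
    (h2 : ∀ i, 0 ≤ zstar i)
    (h3 : ∀ i, 0 < ystar i → Real.sqrt (2 * τ * lam) < ystar i)
    (h4 : ∀ i, 0 < zstar i → τ * zstar i < Real.sqrt (2 * τ * lam)) :
    ∀ i, ∀ t : ℝ,
      (1 / (2 * τ)) * (ystar i - (ystar i + τ * zstar i))^2 + lam * heaviside (ystar i)
        ≤ (1 / (2 * τ)) * (t - (ystar i + τ * zstar i))^2 + lam * heaviside t := by
  intro i t
  have hc : 0 < 1 / (2 * τ) := by positivity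
  have hsq : Real.sqrt (2 * τ * lam) ^ 2 = 2 * τ * lam :=
    Real.sq_sqrt (by positivity)
  have hsn : 0 ≤ Real.sqrt (2 * τ * lam) := Real.sqrt_nonneg _
  have key : ∀ a b : ℝ, 2 * τ * lam ≤ b → (1/(2*τ)) * a + lam ≤ (1/(2*τ)) * a + (1/(2*τ)) * b := by
    intro a b hb
    have : lam ≤ (1/(2*τ)) * b := by
      calc lam = (1/(2*τ)) * (2 * τ * lam) := by field_simp
        _ ≤ (1/(2*τ)) * b := mul_le_mul_of_nonneg_left hb hc.le
    linarith
  by_cases hz : zstar i = 0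
  · rw [hz]
    simp only [mul_zero, add_zero]
    by_cases hy : 0 < ystar i
    · have h3' := h3 i hy
      have hy2 : 2 * τ * lam < (ystar i) ^ 2 := by nlinarith
      unfold heaviside
      rw [if_pos hy]
      by_cases ht : 0 < t
      · rw [if_pos ht]; nlinarith
      · rw [if_neg ht]
        push_neg at ht
        have hb : 2 * τ * lam ≤ (t - ystar i) ^ 2 := by nlinarith
        have := key 0 ((t - ystar i)^2) hb
        simp only [mul_zero, zero_add] at this
        nlinarith
    · unfold heaviside
      rw [if_neg hy]
      have : 0 ≤ lam * (if 0 < t then (1:ℝ) else 0) := by positivity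
      nlinarith [sq_nonneg (t - ystar i), mul_nonneg hc.le (sq_nonneg (t - ystar i))]
  · have hz' : 0 < zstar i := lt_of_le_of_ne (h2 i) (Ne.symm hz)
    have hy0 : ystar i = 0 := h1 i hz
    have h4' := h4 i hz'
    have hzz : (τ * zstar i) ^ 2 < 2 * τ * lam := by nlinarith [mul_nonneg hτ.le (h2 i)]
    rw [hy0]
    simp only [zero_add]
    unfold heaviside
    rw [if_neg (lt_irrefl 0), mul_zero, add_zero]
    by_cases ht : 0 < t
    · rw [if_pos ht, mul_one]
      have hlam' : (1/(2*τ)) * ((0 - τ * zstar i)^2) ≤ lam := by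
        have : (0 - τ * zstar i)^2 ≤ 2 * τ * lam := by nlinarith
        calc (1/(2*τ)) * ((0 - τ * zstar i)^2) ≤ (1/(2*τ)) * (2 * τ * lam) :=
              mul_le_mul_of_nonneg_left this hc.le
          _ = lam := by field_simp
      nlinarith [mul_nonneg hc.le (sq_nonneg (t - τ * zstar i))]
    · rw [if_neg ht, mul_zero, add_zero]
      push_neg at ht
      have hb : (0 - τ * zstar i)^2 ≤ (t - τ * zstar i)^2 := by nlinarith [mul_nonneg hτ.le (h2 i)]
      exact mul_le_mul_of_nonneg_left hb hc.le
end

section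
/- Let y*, z* ∈ ℝ^m and τ, λ > 0 satisfy y* ∈ Prox_{τλ‖(·)₊‖₀}(y* + τz*). Then z*_i = 0 whenever y*_i ≠ 0, and z*_i ≥ 0 whenever y*_i = 0. -/
lemma normsq_aux (m : ℕ) (x : EuclideanSpace ℝ (Fin m)) : ‖x‖^2 = ∑ j, (x j)^2 := by
  rw [EuclideanSpace.norm_eq, Real.sq_sqrt (by positivity)]
  simp [Real.norm_eq_abs, sq_abs]

lemma key_aux (m : ℕ) (τ lam : ℝ) (hτ : 0 < τ) (hlam : 0 < lam)
    (ystar zstar : EuclideanSpace ℝ (Fin m))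
    (hprox : ∀ y : EuclideanSpace ℝ (Fin m),
      (1 / (2 * τ)) * ‖ystar - (ystar + τ • zstar)‖^2
        + lam * (Nat.card {i : Fin m | 0 < ystar i} : ℝ)
      ≤ (1 / (2 * τ)) * ‖y - (ystar + τ • zstar)‖^2
        + lam * (Nat.card {i : Fin m | 0 < y i} : ℝ))
    (i : Fin m) (t : ℝ) (ht : 0 < t ↔ 0 < ystar i) :
    (τ * zstar i)^2 ≤ (t - ystar i - τ * zstar i)^2 := by
  set y : EuclideanSpace ℝ (Fin m) := WithLp.toLp 2 (Function.update ystar i t) with hy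
  have hyi : y i = t := Function.update_self i t ystar
  have hyj : ∀ j, j ≠ i → y j = ystar j := fun j hj => Function.update_of_ne hj t ystar
  have hset : {j : Fin m | 0 < y j} = {j : Fin m | 0 < ystar j} := by
    ext j
    by_cases hj : j = i
    · subst hj; simp [hyi, ht]
    · simp [hyj j hj]
  have h := hprox y
  rw [hset] at h
  have h2 : ‖ystar - (ystar + τ • zstar)‖^2 ≤ ‖y - (ystar + τ • zstar)‖^2 := by
    have hpos : (0:ℝ) < 1 / (2 * τ) := by positivity
    nlinarith [h]
  rw [normsq_aux, normsq_aux] at h2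
  have hsum1 : ∀ j : Fin m, ((ystar - (ystar + τ • zstar)) j)^2 = (τ * zstar j)^2 := by
    intro j
    have hj : (ystar - (ystar + τ • zstar)) j = -(τ * zstar j) := by
      simp [PiLp.sub_apply, PiLp.add_apply, PiLp.smul_apply, smul_eq_mul]
    rw [hj, neg_sq]
  have hsum2 : ∀ j : Fin m, (y - (ystar + τ • zstar)) j = y j - ystar j - τ * zstar j := by
    intro j
    simp [PiLp.sub_apply, PiLp.add_apply, PiLp.smul_apply, smul_eq_mul]
    ring
  have e1 : ∑ j, ((ystar - (ystar + τ • zstar)) j)^2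
      = (τ * zstar i)^2 + ∑ j ∈ Finset.univ.erase i, (τ * zstar j)^2 := by
    rw [Finset.sum_congr rfl (fun j _ => hsum1 j)]
    exact (Finset.add_sum_erase Finset.univ _ (Finset.mem_univ i)).symm
  have e2 : ∑ j, ((y - (ystar + τ • zstar)) j)^2
      = (t - ystar i - τ * zstar i)^2 + ∑ j ∈ Finset.univ.erase i, (τ * zstar j)^2 := by
    rw [← Finset.add_sum_erase Finset.univ _ (Finset.mem_univ i)]
    congr 1
    · rw [hsum2 i, hyi]
    · apply Finset.sum_congr rfl
      intro j hj
      rw [hsum2 j, hyj j (Finset.ne_of_mem_erase hj)]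
      ring
  rw [e1, e2] at h2
  linarith

theorem stmt_10 (m : ℕ) (τ lam : ℝ) (hτ : 0 < τ) (hlam : 0 < lam)
    (ystar zstar : EuclideanSpace ℝ (Fin m))
    (hprox : ∀ y : EuclideanSpace ℝ (Fin m),
      (1 / (2 * τ)) * ‖ystar - (ystar + τ • zstar)‖^2
        + lam * (Nat.card {i : Fin m | 0 < ystar i} : ℝ)
      ≤ (1 / (2 * τ)) * ‖y - (ystar + τ • zstar)‖^2
        + lam * (Nat.card {i : Fin m | 0 < y i} : ℝ)) :
    ∀ i, (ystar i ≠ 0 → zstar i = 0) ∧ (ystar i = 0 → 0 ≤ zstar i) := by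
  intro i
  constructor
  · intro hne
    rcases lt_or_gt_of_ne hne with hneg | hpos
    · -- ystar i < 0
      by_cases hc : ystar i + τ * zstar i ≤ 0
      · have hk := key_aux m τ lam hτ hlam ystar zstar hprox i (ystar i + τ * zstar i)
          (by constructor <;> intro h <;> [linarith; linarith])
        have : (τ * zstar i)^2 ≤ 0 := by nlinarith [hk]
        have : τ * zstar i = 0 := by nlinarith [sq_nonneg (τ * zstar i)]
        have := mul_eq_zero.mp this
        rcases this with h | h
        · exact absurd h (ne_of_gt hτ)
        · exact h
      · push_neg at hc
        have hk := key_aux m τ lam hτ hlam ystar zstar hprox i 0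
          (by constructor <;> intro h <;> linarith)
        nlinarith [hk]
    · -- ystar i > 0
      by_cases hc : 0 < ystar i + τ * zstar i
      · have hk := key_aux m τ lam hτ hlam ystar zstar hprox i (ystar i + τ * zstar i)
          (by constructor <;> intro h <;> linarith)
        have : τ * zstar i = 0 := by nlinarith [sq_nonneg (τ * zstar i), hk]
        rcases mul_eq_zero.mp this with h | h
        · exact absurd h (ne_of_gt hτ)
        · exact h
      · push_neg at hc
        have hk := key_aux m τ lam hτ hlam ystar zstar hprox i (ystar i / 2)
          (by constructor <;> intro h <;> linarith)
        nlinarith [hk]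
  · intro hz
    by_contra hneg
    push_neg at hneg
    have hk := key_aux m τ lam hτ hlam ystar zstar hprox i (τ * zstar i)
      (by constructor <;> intro h <;> nlinarith)
    rw [hz] at hk
    have ha : τ * zstar i < 0 := mul_neg_of_pos_of_neg hτ hneg
    nlinarith [hk, mul_pos_of_neg_of_neg ha ha]
end

section
/- Let τ, λ > 0 and suppose y ∈ Prox_{τλ‖(·)₊‖₀}(y + τz) for y, z ∈ ℝ^m. Define S = {i : |y_i + τz_i − √(τλ/2)| < √(τλ/2)}. Then y_i = 0 for every i ∈ S. -/
theorem stmt_17 (m : ℕ) (τ lam : ℝ) (hτ : 0 < τ) (hlam : 0 < lam)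
    (y z : Fin m → ℝ)
    (hprox : ∀ i, ∀ t : ℝ,
      (1 / (2 * τ)) * (y i - (y i + τ * z i))^2 + lam * heaviside (y i)
        ≤ (1 / (2 * τ)) * (t - (y i + τ * z i))^2 + lam * heaviside t) :
    ∀ i, |y i + τ * z i - Real.sqrt (τ * lam / 2)| < Real.sqrt (τ * lam / 2) → y i = 0 := by
  intro i habs
  set w := y i + τ * z i with hw
  set s := Real.sqrt (τ * lam / 2) with hs
  have hs2 : s ^ 2 = τ * lam / 2 := Real.sq_sqrt (by positivity)
  clear_value w s
  rw [abs_lt] at habs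
  have hw0 : 0 < w := by linarith [habs.1]
  have hw2s : w < 2 * s := by linarith [habs.2]
  have hwsq : w ^ 2 < 2 * τ * lam := by nlinarith
  have hτ' : 0 < 1 / (2 * τ) := by positivity
  have e3 : heaviside 0 = 0 := by simp [heaviside]
  rcases lt_trichotomy (y i) 0 with hneg | h0 | hpos
  · exfalso
    have h := hprox i 0
    rw [← hw] at h
    have e1 : heaviside (y i) = 0 := by simp [heaviside, not_lt.mpr hneg.le]
    rw [e1, e3] at h
    have key : w ^ 2 < (y i - w) ^ 2 := by nlinarith [mul_pos hw0 (neg_pos.mpr hneg)]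
    nlinarith [mul_lt_mul_of_pos_left key hτ']
  · exact h0
  · exfalso
    have h1 := hprox i w
    have h2 := hprox i 0
    rw [← hw] at h1 h2
    have e1 : heaviside (y i) = 1 := by simp [heaviside, hpos]
    have e2 : heaviside w = 1 := by simp [heaviside, hw0]
    rw [e1, e2] at h1
    rw [e1, e3] at h2
    have h4 : (y i - w) ^ 2 ≤ 0 := by nlinarith [h1, hτ', show 1/(2*τ)*(w - w)^2 = 0 from by ring]
    have h5 : (y i - w) ^ 2 = 0 := le_antisymm h4 (sq_nonneg _)
    have hyw : y i = w := by
      have := pow_eq_zero_iff (n := 2) (by norm_num) |>.mp h5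
      linarith [this]
    rw [hyw] at h2
    have h6 : lam ≤ w ^ 2 / (2 * τ) := by
      have he : (1:ℝ) / (2 * τ) * (0 - w) ^ 2 = w ^ 2 / (2 * τ) := by ring
      nlinarith [h2, he]
    rw [le_div_iff₀ (by positivity)] at h6
    nlinarith
end
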